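/- Let (ρ_K)_{K} be a finite family of real numbers indexed by cells of a 1D finite volume mesh with periodic boundary, satisfying the upwind discrete transport update ρ_K^{n+1} = ρ_K^n - (δt/|K|)(F_{K,right} + F_{K,left}) where each flux F_{K,σ} = |σ| ρ_σ u_{K,σ} uses the upwind value ρ_σ = ρ_K if u_{K,σ} ≥ 0 and ρ_σ = ρ_L otherwise, and where the discrete velocity is divergence-free on each cell (the sum of |σ| u_{K,σ} over the two faces of K is zero). If ρ_min ≤ ρ_K^n ≤ ρ_max for all K and the CFL-free implicit form ρ^{n+1} solves the implicit upwind scheme, then ρ_min ≤ ρ_K^{n+1} ≤ ρ_max for all K. -/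

import Mathlib

/-- Discrete maximum principle for the implicit upwind finite volume scheme for the
transport equation on a periodic 1D mesh with a discretely divergence-free velocity. -/
theorem implicit_upwind_max_principle
    (n : ℕ) [NeZero n]
    (δt ρmin ρmax : ℝ) (hδt : 0 < δt)
    (vol : Fin n → ℝ) (hvol : ∀ i, 0 < vol i)
    (u : Fin n → ℝ)                      -- velocity at face i (between cell i and cell i+1)
    (hdiv : ∀ i : Fin n, u i - u (i - 1) = 0)   -- discrete divergence-free on each cell
    (ρ ρ' : Fin n → ℝ)
    (upw : Fin n → ℝ)
    (hupw : ∀ i : Fin n, upw i = if 0 ≤ u i then ρ' i else ρ' (i + 1))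
    (hscheme : ∀ i : Fin n,
      (ρ' i - ρ i) / δt + (1 / vol i) * (u i * upw i - u (i - 1) * upw (i - 1)) = 0)
    (hlow : ∀ i, ρmin ≤ ρ i) (hhigh : ∀ i, ρ i ≤ ρmax) :
    ∀ i, ρmin ≤ ρ' i ∧ ρ' i ≤ ρmax := by
  -- the velocity is constant
  have hstep : ∀ i : Fin n, u (i + 1) = u i := by
    intro i
    have h := hdiv (i + 1)
    have : i + 1 - 1 = i := add_sub_cancel_right i 1
    rw [this] at h
    linarith
  open Fin.CommRing in
  have hnat : ∀ k : ℕ, u (k : Fin n) = u 0 := by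
    intro k
    induction k with
    | zero => simp
    | succ m ih =>
        have : ((m + 1 : ℕ) : Fin n) = (m : Fin n) + 1 := by push_cast; ring
        rw [this, hstep, ih]
  open Fin.CommRing in
  have hc : ∀ i : Fin n, u i = u 0 := by
    intro i
    have := hnat (i : ℕ)
    rwa [Fin.cast_val_eq_self] at this
  set c := u 0 with hc0
  -- cleaned scheme equation
  have hclean : ∀ i : Fin n,
      (ρ' i - ρ i) * vol i + δt * c * (upw i - upw (i - 1)) = 0 := by
    intro i
    have h := hscheme i
    have hv := (hvol i).ne'
    rw [hc i, hc (i - 1)] at h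
    field_simp at h
    nlinarith [h]
  obtain ⟨imax, -, hmax⟩ := Finset.exists_max_image Finset.univ ρ' ⟨0, Finset.mem_univ 0⟩
  obtain ⟨imin, -, hmin⟩ := Finset.exists_min_image Finset.univ ρ' ⟨0, Finset.mem_univ 0⟩
  have hmax' : ∀ j, ρ' j ≤ ρ' imax := fun j => hmax j (Finset.mem_univ j)
  have hmin' : ∀ j, ρ' imin ≤ ρ' j := fun j => hmin j (Finset.mem_univ j)
  have hupmax : ρ' imax ≤ ρmax := by
    rcases le_or_gt 0 c with hcpos | hcneg
    · have h := hclean imax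
      rw [hupw imax, hupw (imax - 1), hc imax, hc (imax - 1)] at h
      simp only [if_pos hcpos] at h
      have h1 := hmax' (imax - 1)
      have h2 := hmax' (imax - 1 + 1)
      have := hhigh imax
      nlinarith [hvol imax, mul_nonneg (le_of_lt hδt) hcpos]
    · have h := hclean imax
      rw [hupw imax, hupw (imax - 1), hc imax, hc (imax - 1)] at h
      simp only [if_neg (not_le.mpr hcneg)] at h
      have h1 := hmax' (imax + 1)
      have h2 := hmax' (imax - 1 + 1)
      have : imax - 1 + 1 = imax := sub_add_cancel imax 1
      rw [this] at h
      have := hhigh imax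
      nlinarith [hvol imax, mul_pos hδt (neg_pos.mpr hcneg)]
  have hlomin : ρmin ≤ ρ' imin := by
    rcases le_or_gt 0 c with hcpos | hcneg
    · have h := hclean imin
      rw [hupw imin, hupw (imin - 1), hc imin, hc (imin - 1)] at h
      simp only [if_pos hcpos] at h
      have h1 := hmin' (imin - 1)
      have := hlow imin
      nlinarith [hvol imin, mul_nonneg (le_of_lt hδt) hcpos]
    · have h := hclean imin
      rw [hupw imin, hupw (imin - 1), hc imin, hc (imin - 1)] at h
      simp only [if_neg (not_le.mpr hcneg)] at h
      have h1 := hmin' (imin + 1)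
      have : imin - 1 + 1 = imin := sub_add_cancel imin 1
      rw [this] at h
      have := hlow imin
      nlinarith [hvol imin, mul_pos hδt (neg_pos.mpr hcneg)]
  intro i
  exact ⟨le_trans hlomin (hmin' i), le_trans (hmax' i) hupmax⟩
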